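/- Let 𝔐_1 and 𝔐_2 be matroids on [m] with a common fixed linear order, such that every independent set of 𝔐_2 is independent in 𝔐_1. Then for each i, the number of i-element subsets of [m] that are independent in 𝔐_1 and contain no broken circuit of 𝔐_1 is at least the number of i-element subsets independent in 𝔐_2 containing no broken circuit of 𝔐_2. Equivalently (via the NBC theorem), the signless Whitney numbers of the first kind satisfy |w_i(𝔐_1)| ≥ |w_i(𝔐_2)|. -/

import Mathlib

/-- A circuit of a matroid: a minimal dependent set (given here as a finite set, for a
matroid whose ground set is the whole type). -/
def IsCircuitOf {α : Type*} (M : Matroid α) (C : Finset α) : Prop :=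
  ¬ M.Indep ↑C ∧ ∀ D : Finset α, D ⊂ C → M.Indep ↑D

/-- A broken circuit: a circuit with its maximal element (in the fixed linear order)
removed. -/
def IsBrokenCircuitOf {α : Type*} [LinearOrder α] (M : Matroid α) (B : Finset α) : Prop :=
  ∃ (C : Finset α) (hC : C.Nonempty), IsCircuitOf M C ∧ B = C.erase (C.max' hC)

/-- An NBC set of size `i`: an `i`-element independent set containing no broken circuit.
By Whitney's NBC theorem, the number of such sets is `|wᵢ(𝔐)|`. -/
def NBCSets {α : Type*} [LinearOrder α] (M : Matroid α) (i : ℕ) : Set (Finset α) :=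
  {S | S.card = i ∧ M.Indep ↑S ∧ ∀ B : Finset α, IsBrokenCircuitOf M B → ¬ B ⊆ S}

/-- Any dependent finset contains a circuit. -/
lemma exists_circuit_subset {α : Type*} (M : Matroid α) (C : Finset α)
    (hC : ¬ M.Indep ↑C) : ∃ C' ⊆ C, IsCircuitOf M C' := by
  classical
  have hne : (C.powerset.filter (fun D : Finset α => ¬ M.Indep (↑D : Set α))).Nonempty :=
    ⟨C, by simp [hC]⟩
  obtain ⟨C', hC', hmin'⟩ := Finset.exists_minimal hne
  have hmin := fun x hx (hlt : x < C') => lt_irrefl _ (hlt.trans_le (hmin' hx hlt.le))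
  simp only [Finset.mem_filter, Finset.mem_powerset] at hC'
  refine ⟨C', hC'.1, hC'.2, fun D hD => ?_⟩
  by_contra hDind
  exact hmin D (by simp [Finset.mem_filter, Finset.mem_powerset,
    hD.subset.trans hC'.1, hDind]) hD

/-- If every independent set of `𝔐₂` is independent in `𝔐₁`, then for each
`i` the number of NBC `i`-sets of `𝔐₁` is at least that of `𝔐₂`, i.e.
`|wᵢ(𝔐₁)| ≥ |wᵢ(𝔐₂)|`. -/
theorem stmt15 {m : ℕ} (M₁ M₂ : Matroid (Fin m))
    (hE₁ : M₁.E = Set.univ) (hE₂ : M₂.E = Set.univ)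
    (hind : ∀ S : Set (Fin m), M₂.Indep S → M₁.Indep S) (i : ℕ) :
    (NBCSets M₂ i).ncard ≤ (NBCSets M₁ i).ncard := by
  apply Set.ncard_le_ncard _ (Set.toFinite _)
  rintro S ⟨hcard, hSind, hnbc⟩
  refine ⟨hcard, hind _ hSind, ?_⟩
  rintro B ⟨C, hCne, ⟨hCdep, -⟩, rfl⟩ hBS
  -- C is dependent in M₂
  have hCdep₂ : ¬ M₂.Indep ↑C := fun h => hCdep (hind _ h)
  obtain ⟨C', hC'sub, hC'circ⟩ := exists_circuit_subset M₂ C hCdep₂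
  have hC'ne : C'.Nonempty := by
    rcases C'.eq_empty_or_nonempty with rfl | h
    · exact absurd (by simpa using M₂.empty_indep) hC'circ.1
    · exact h
  by_cases hmax : C'.max' hC'ne = C.max' hCne
  · -- broken circuit of M₂ inside S
    refine hnbc _ ⟨C', hC'ne, hC'circ, rfl⟩ (fun x hx => ?_)
    simp only [Finset.mem_erase] at hx
    apply hBS
    simp only [Finset.mem_erase]
    exact ⟨hmax ▸ hx.1, hC'sub hx.2⟩
  · -- C' avoids max of C, so C' ⊆ B ⊆ S, contradicting independence of S
    have hnotmem : C.max' hCne ∉ C' := fun hmem =>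
      hmax (le_antisymm (C.le_max' _ (hC'sub (C'.max'_mem hC'ne))) (C'.le_max' _ hmem))
    have hsub : (↑C' : Set (Fin m)) ⊆ ↑S := by
      intro x hx
      simp only [Finset.coe_subset, Finset.mem_coe] at *
      apply hBS
      simp only [Finset.mem_erase]
      exact ⟨fun h => hnotmem (h ▸ hx), hC'sub hx⟩
    exact hC'circ.1 (hSind.subset hsub)
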